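/- Let S be an invertible n×n real matrix with all entries of the last row of S⁻¹ nonzero, and let Λ(a,i) = (S⁻¹)(a,i)/(S⁻¹)(n,i). Then for any indices i, j, h with det Λ_h^i ≠ 0, the ratio det(Λ_j^i)/det(Λ_h^i) equals (-1)^{h+j} · S(i,j)/S(i,h); in particular S(i,h) ≠ 0. -/

import Mathlib

open Matrix BigOperators

/-- The submatrix of `M` obtained by deleting row `h` and column `i`. -/
def delMinor {n : ℕ} (M : Matrix (Fin (n+1)) (Fin (n+1)) ℝ) (h i : Fin (n+1)) :
    Matrix (Fin n) (Fin n) ℝ :=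
  M.submatrix h.succAbove i.succAbove

lemma neg_one_pow_sq (k : ℕ) : (-1 : ℝ) ^ k * (-1 : ℝ) ^ k = 1 := by
  rw [← pow_add]
  exact (Even.neg_one_pow ⟨k, rfl⟩)

lemma delMinor_det_eq {n : ℕ} (S : Matrix (Fin (n+1)) (Fin (n+1)) ℝ) (hS : IsUnit S.det)
    (i j : Fin (n+1)) :
    (delMinor S⁻¹ j i).det = (-1 : ℝ) ^ ((j : ℕ) + (i : ℕ)) * S⁻¹.det * S i j := by
  have hadj : (S⁻¹).adjugate i j
      = (-1 : ℝ) ^ ((j : ℕ) + (i : ℕ)) * (delMinor S⁻¹ j i).det :=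
    Matrix.adjugate_fin_succ_eq_det_submatrix _ _ _
  have hadj2 : (S⁻¹).adjugate = S⁻¹.det • S := by
    calc (S⁻¹).adjugate = (S * S⁻¹) * (S⁻¹).adjugate := by
          rw [Matrix.mul_nonsing_inv S hS, one_mul]
      _ = S * (S⁻¹ * (S⁻¹).adjugate) := by rw [Matrix.mul_assoc]
      _ = S * (S⁻¹.det • (1 : Matrix (Fin (n+1)) (Fin (n+1)) ℝ)) := by
          rw [Matrix.mul_adjugate]
      _ = S⁻¹.det • S := by rw [Matrix.mul_smul, Matrix.mul_one]
  have this1 : S⁻¹.det * S i j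
      = (-1 : ℝ) ^ ((j : ℕ) + (i : ℕ)) * (delMinor S⁻¹ j i).det := by
    rw [← hadj, hadj2, Matrix.smul_apply, smul_eq_mul]
  have h3 : (-1 : ℝ) ^ ((j : ℕ) + (i : ℕ)) * (S⁻¹.det * S i j)
      = (delMinor S⁻¹ j i).det := by
    rw [this1, ← mul_assoc, neg_one_pow_sq, one_mul]
  rw [← h3]; ring

/-- the fundamental functions, i.e. ratios of complementary minors of the
eigenvalue matrix Λ, equal signed ratios of entries of the Stäckel matrix S. -/
theorem stmt6 {n : ℕ} (S : Matrix (Fin (n+1)) (Fin (n+1)) ℝ) (hS : IsUnit S.det)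
    (hg : ∀ i, S⁻¹ (Fin.last n) i ≠ 0)
    (Λ : Matrix (Fin (n+1)) (Fin (n+1)) ℝ)
    (hΛ : ∀ a i, Λ a i = S⁻¹ a i / S⁻¹ (Fin.last n) i) :
    ∀ i j h : Fin (n+1), (delMinor Λ h i).det ≠ 0 →
      (delMinor Λ j i).det / (delMinor Λ h i).det
          = (-1 : ℝ) ^ ((h : ℕ) + (j : ℕ)) * (S i j / S i h)
        ∧ S i h ≠ 0 := by
  intro i j h hne
  set c : ℝ := ∏ l : Fin n, (S⁻¹ (Fin.last n) (i.succAbove l))⁻¹ with hc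
  have hc0 : c ≠ 0 := Finset.prod_ne_zero_iff.2 fun l _ => inv_ne_zero (hg _)
  have hfac : ∀ a : Fin (n+1), (delMinor Λ a i).det = (delMinor S⁻¹ a i).det * c := by
    intro a
    have heq : delMinor Λ a i
        = (delMinor S⁻¹ a i) * Matrix.diagonal (fun l => (S⁻¹ (Fin.last n) (i.succAbove l))⁻¹) := by
      ext k l
      simp [delMinor, Matrix.mul_apply, Matrix.diagonal, hΛ, div_eq_mul_inv,
        Finset.sum_eq_single l, Matrix.submatrix_apply]
    rw [heq, Matrix.det_mul, Matrix.det_diagonal]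
  have hdu : S⁻¹.det ≠ 0 := by
    have := Matrix.det_nonsing_inv_mul_det S hS
    exact left_ne_zero_of_mul_eq_one this
  have dj := delMinor_det_eq S hS i j
  have dh := delMinor_det_eq S hS i h
  have hSh : S i h ≠ 0 := by
    intro h0
    apply hne
    rw [hfac, dh, h0]; ring
  refine ⟨?_, hSh⟩
  rw [hfac j, hfac h, dj, dh]
  set a := S i j
  set b := S i h
  set e := S⁻¹.det
  set sj : ℝ := (-1 : ℝ) ^ ((j : ℕ) + (i : ℕ)) with hsjdef
  set sh : ℝ := (-1 : ℝ) ^ ((h : ℕ) + (i : ℕ)) with hshdef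
  have hsh2 : sh * sh = 1 := neg_one_pow_sq _
  have key : sj * sh = (-1 : ℝ) ^ ((h : ℕ) + (j : ℕ)) := by
    rw [hsjdef, hshdef, ← pow_add]
    have h2 : (j : ℕ) + (i : ℕ) + ((h : ℕ) + (i : ℕ)) = (h : ℕ) + (j : ℕ) + 2 * (i : ℕ) := by
      ring
    rw [h2, pow_add, pow_mul]
    norm_num
  have hsh0 : sh ≠ 0 := fun h0 => by simp [h0] at hsh2
  clear_value a b e c sj sh
  have hden : sh * e * b * c ≠ 0 := by
    exact mul_ne_zero (mul_ne_zero (mul_ne_zero hsh0 hdu) hSh) hc0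
  rw [← key, div_eq_iff hden]
  field_simp
  linear_combination (-(sj * a)) * hsh2
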